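/- For coherence spaces, if two coherence spaces have the same set of sequential traces (interleaving trace equivalent) then they have the same set of step traces (step trace equivalent). -/

import Mathlib

/-- A labelled prime event structure over alphabet `A`. -/
structure PES (A : Type*) where
  E : Type*
  le : E → E → Prop
  conflict : E → E → Prop
  lab : E → A
  le_refl : ∀ e, le e e
  le_trans : ∀ e e' e'', le e e' → le e' e'' → le e e''
  le_antisymm : ∀ e e', le e e' → le e' e → e = e'
  finite_past : ∀ e, Set.Finite {e' | le e' e ∧ e' ≠ e}
  conflict_irrefl : ∀ e, ¬ conflict e e
  conflict_symm : ∀ e e', conflict e e' → conflict e' e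
  conflict_inherit : ∀ e e' e'', le e e' → e ≠ e' → conflict e e'' → conflict e' e''

namespace PES

variable {A : Type*}

/-- A coherence space: a PES with empty (strict) causality. -/
def IsCS (P : PES A) : Prop := ∀ e e', P.le e e' → e = e'

/-- An elementary event structure: a PES with empty conflict. -/
def IsEES (P : PES A) : Prop := ∀ e e', ¬ P.conflict e e'

/-- Concurrency. -/
def co (P : PES A) (e e' : P.E) : Prop :=
  ¬ P.le e e' ∧ ¬ P.le e' e ∧ ¬ P.conflict e e'

/-- Configurations: finite, conflict-free, downward-closed sets of events. -/
def Config (P : PES A) (X : Set P.E) : Prop :=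
  X.Finite ∧ (∀ e ∈ X, ∀ e' ∈ X, ¬ P.conflict e e') ∧
    (∀ e ∈ X, ∀ e', P.le e' e → e' ∈ X)

/-- Single-event labelled transition between configurations. -/
def Trans (P : PES A) (X : Set P.E) (a : A) (X' : Set P.E) : Prop :=
  P.Config X ∧ P.Config X' ∧ ∃ e, e ∉ X ∧ X' = insert e X ∧ P.lab e = a

/-- `X` can perform the sequential trace `w`. -/
def TraceFrom (P : PES A) : Set P.E → List A → Prop
  | X, [] => P.Config X
  | X, a :: w => ∃ X', P.Trans X a X' ∧ P.TraceFrom X' w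

/-- Sequential traces of a PES. -/
def STr (P : PES A) (w : List A) : Prop := P.TraceFrom ∅ w

/-- Interleaving trace equivalence. -/
def ITrEq (P Q : PES A) : Prop := ∀ w : List A, P.STr w ↔ Q.STr w

/-- Interleaving bisimulation. -/
def IBisim (P Q : PES A) (R : Set P.E → Set Q.E → Prop) : Prop :=
  R ∅ ∅ ∧ ∀ X Y, R X Y →
    (∀ a X', P.Trans X a X' → ∃ Y', Q.Trans Y a Y' ∧ R X' Y') ∧
    (∀ a Y', Q.Trans Y a Y' → ∃ X', P.Trans X a X' ∧ R X' Y')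

/-- Interleaving bisimilarity. -/
def IBisimilar (P Q : PES A) : Prop := ∃ R, IBisim P Q R

/-- Step transition, labelled by the multiset of labels of a nonempty set of
pairwise concurrent events added at once. -/
def StepTrans (P : PES A) (X : Set P.E) (m : Multiset A) (X' : Set P.E) : Prop :=
  P.Config X ∧ P.Config X' ∧ X ⊆ X' ∧ ∃ G : Finset P.E, ↑G = X' \ X ∧ G.Nonempty ∧
    (∀ e ∈ G, ∀ e' ∈ G, e ≠ e' → P.co e e') ∧ Multiset.map P.lab G.val = m

/-- `X` can perform the step trace `s`. -/
def StepTraceFrom (P : PES A) : Set P.E → List (Multiset A) → Prop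
  | X, [] => P.Config X
  | X, m :: s => ∃ X', P.StepTrans X m X' ∧ P.StepTraceFrom X' s

/-- Step traces of a PES. -/
def StTr (P : PES A) (s : List (Multiset A)) : Prop := P.StepTraceFrom ∅ s

/-- Step trace equivalence. -/
def STrEq (P Q : PES A) : Prop := ∀ s : List (Multiset A), P.StTr s ↔ Q.StTr s

/-- Step bisimulation. -/
def SBisim (P Q : PES A) (R : Set P.E → Set Q.E → Prop) : Prop :=
  R ∅ ∅ ∧ ∀ X Y, R X Y →
    (∀ m X', P.StepTrans X m X' → ∃ Y', Q.StepTrans Y m Y' ∧ R X' Y') ∧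
    (∀ m Y', Q.StepTrans Y m Y' → ∃ X', P.StepTrans X m X' ∧ R X' Y')

/-- Step bisimilarity. -/
def SBisimilar (P Q : PES A) : Prop := ∃ R, SBisim P Q R

/-- `f` restricts to a label-preserving order-isomorphism from `X` onto `Y`. -/
def IsoOn (P Q : PES A) (f : P.E → Q.E) (X : Set P.E) (Y : Set Q.E) : Prop :=
  Set.BijOn f X Y ∧ (∀ e ∈ X, ∀ e' ∈ X, (P.le e e' ↔ Q.le (f e) (f e'))) ∧
    ∀ e ∈ X, Q.lab (f e) = P.lab e

/-- The labelled posets induced by `X` and `Y` are isomorphic (same pomset). -/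
def PIso (P Q : PES A) (X : Set P.E) (Y : Set Q.E) : Prop :=
  ∃ f, IsoOn P Q f X Y

/-- Pomset trace equivalence: same sets of pomsets of configurations. -/
def PTrEq (P Q : PES A) : Prop :=
  (∀ X, P.Config X → ∃ Y, Q.Config Y ∧ PIso P Q X Y) ∧
  (∀ Y, Q.Config Y → ∃ X, P.Config X ∧ PIso P Q X Y)

/-- Pomset transition: strictly extending a configuration. -/
def PomTrans (P : PES A) (X X' : Set P.E) : Prop :=
  P.Config X ∧ P.Config X' ∧ X ⊂ X'

/-- Pomset bisimulation: matched extensions must add isomorphic pomsets. -/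
def PBisim (P Q : PES A) (R : Set P.E → Set Q.E → Prop) : Prop :=
  R ∅ ∅ ∧ ∀ X Y, R X Y →
    (∀ X', P.PomTrans X X' →
      ∃ Y', Q.PomTrans Y Y' ∧ PIso P Q (X' \ X) (Y' \ Y) ∧ R X' Y') ∧
    (∀ Y', Q.PomTrans Y Y' →
      ∃ X', P.PomTrans X X' ∧ PIso P Q (X' \ X) (Y' \ Y) ∧ R X' Y')

/-- Pomset bisimilarity. -/
def PBisimilar (P Q : PES A) : Prop := ∃ R, PBisim P Q R

/-- Weak history preserving bisimulation. -/
def WHBisim (P Q : PES A) (R : Set P.E → Set Q.E → Prop) : Prop :=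
  R ∅ ∅ ∧ ∀ X Y, R X Y → PIso P Q X Y ∧
    (∀ a X', P.Trans X a X' → ∃ Y', Q.Trans Y a Y' ∧ R X' Y') ∧
    (∀ a Y', Q.Trans Y a Y' → ∃ X', P.Trans X a X' ∧ R X' Y')

/-- Weak history preserving bisimilarity. -/
def WHBisimilar (P Q : PES A) : Prop := ∃ R, WHBisim P Q R

/-- History preserving bisimulation: triples `(X, Y, f)`. -/
def HBisim (P Q : PES A) (R : Set P.E → Set Q.E → (P.E → Q.E) → Prop) : Prop :=
  (∃ f, R ∅ ∅ f) ∧ ∀ X Y f, R X Y f → IsoOn P Q f X Y ∧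
    (∀ a X', P.Trans X a X' →
      ∃ Y' f', Q.Trans Y a Y' ∧ R X' Y' f' ∧ ∀ e ∈ X, f' e = f e) ∧
    (∀ a Y', Q.Trans Y a Y' →
      ∃ X' f', P.Trans X a X' ∧ R X' Y' f' ∧ ∀ e ∈ X, f' e = f e)

/-- History preserving bisimilarity. -/
def HBisimilar (P Q : PES A) : Prop := ∃ R, HBisim P Q R

/-- Closure under backward transitions, as needed for hereditary hp-bisimulations. -/
def Hereditary (P Q : PES A) (R : Set P.E → Set Q.E → (P.E → Q.E) → Prop) : Prop :=
  ∀ X Y f, R X Y f →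
    (∀ a X', P.Trans X' a X → R X' (f '' X') f) ∧
    (∀ a Y', Q.Trans Y' a Y → R {e ∈ X | f e ∈ Y'} Y' f)

/-- Hereditary history preserving bisimilarity. -/
def HHBisimilar (P Q : PES A) : Prop := ∃ R, HBisim P Q R ∧ Hereditary P Q R

/-- Isomorphism of PESs. -/
def Iso (P Q : PES A) : Prop :=
  ∃ f : P.E ≃ Q.E, (∀ e e', P.le e e' ↔ Q.le (f e) (f e')) ∧
    (∀ e e', P.conflict e e' ↔ Q.conflict (f e) (f e')) ∧
    ∀ e, Q.lab (f e) = P.lab e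

end PES



namespace PES

variable {A : Type*} {P : PES A}

/-- Multi-step sequential transitions with recorded endpoint. -/
def Steps (P : PES A) : Set P.E → List A → Set P.E → Prop
  | X, [], X' => X' = X ∧ P.Config X
  | X, a :: w, X'' => ∃ X', P.Trans X a X' ∧ P.Steps X' w X''

lemma steps_config_left {X X' : Set P.E} {w : List A} (h : P.Steps X w X') :
    P.Config X := by
  cases w with
  | nil => exact h.2
  | cons a w => obtain ⟨X₁, hT, _⟩ := h; exact hT.1

lemma steps_config_right {w : List A} :
    ∀ {X X' : Set P.E}, P.Steps X w X' → P.Config X' := by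
  induction w with
  | nil => intro X X' h; rw [h.1]; exact h.2
  | cons a w ih => intro X X' h; obtain ⟨X₁, hT, hs⟩ := h; exact ih hs

lemma traceFrom_iff_steps {w : List A} :
    ∀ {X : Set P.E}, P.TraceFrom X w ↔ ∃ X', P.Steps X w X' := by
  induction w with
  | nil =>
    intro X
    constructor
    · intro h; exact ⟨X, rfl, h⟩
    · rintro ⟨X', h⟩; exact h.2
  | cons a w ih =>
    intro X
    constructor
    · rintro ⟨X₁, hT, hf⟩
      obtain ⟨X', hs⟩ := ih.mp hf
      exact ⟨X', X₁, hT, hs⟩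
    · rintro ⟨X', X₁, hT, hs⟩
      exact ⟨X₁, hT, ih.mpr ⟨X', hs⟩⟩

lemma steps_traceFrom_append {w w' : List A} :
    ∀ {X X' : Set P.E}, P.Steps X w X' → P.TraceFrom X' w' →
      P.TraceFrom X (w ++ w') := by
  induction w with
  | nil =>
    intro X X' h h'
    rw [h.1] at h'
    simpa using h'
  | cons a w ih =>
    intro X X' h h'
    obtain ⟨X₁, hT, hs⟩ := h
    exact ⟨X₁, hT, ih hs h'⟩

lemma config_subset (hP : P.IsCS) {X Y : Set P.E} (hX : P.Config X) (hYX : Y ⊆ X) :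
    P.Config Y := by
  refine ⟨hX.1.subset hYX, fun e he e' he' => hX.2.1 e (hYX he) e' (hYX he'), ?_⟩
  intro e he e' hle
  rw [hP e' e hle]; exact he

lemma seq_of_list (hP : P.IsCS) :
    ∀ (l : List P.E) (X : Set P.E), P.Config (X ∪ {e | e ∈ l}) → l.Nodup →
      (∀ e ∈ l, e ∉ X) → P.Steps X (l.map P.lab) (X ∪ {e | e ∈ l}) := by
  intro l
  induction l with
  | nil =>
    intro X hC _ _
    have : X ∪ {e | e ∈ ([] : List P.E)} = X := by simp
    rw [this] at hC ⊢
    exact ⟨rfl, hC⟩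
  | cons a l ih =>
    intro X hC hnd hd
    have hset : insert a X ∪ {e | e ∈ l} = X ∪ {e | e ∈ a :: l} := by
      ext x; simp; tauto
    refine ⟨insert a X, ?_, ?_⟩
    · refine ⟨config_subset hP hC Set.subset_union_left, ?_,
        a, hd a List.mem_cons_self, rfl, rfl⟩
      refine config_subset hP hC ?_
      intro x hx
      rcases hx with rfl | hx
      · exact Or.inr (by simp)
      · exact Or.inl hx
    · rw [← hset] at hC ⊢
      refine ih (insert a X) hC hnd.of_cons ?_
      intro e he hmem
      rcases hmem with rfl | hmem
      · exact (List.nodup_cons.mp hnd).1 he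
      · exact hd e (List.mem_cons_of_mem a he) hmem

lemma sets_of_steps {w : List A} :
    ∀ {X X' : Set P.E}, P.Steps X w X' →
      X ⊆ X' ∧ ∃ l : List P.E, l.Nodup ∧ {e | e ∈ l} = X' \ X ∧
        l.map P.lab = w := by
  induction w with
  | nil =>
    intro X X' h
    rw [h.1]
    exact ⟨subset_rfl, [], List.nodup_nil, by simp, rfl⟩
  | cons a w ih =>
    intro X X' h
    obtain ⟨X₁, ⟨_, _, e, heX, hX₁, hlab⟩, hs⟩ := h
    obtain ⟨hsub, l, hnd, hlset, hlmap⟩ := ih hs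
    have heX₁ : e ∈ X₁ := by rw [hX₁]; exact Set.mem_insert e X
    have hX₁sub : X₁ ⊆ X' := hsub
    constructor
    · rw [hX₁] at hsub
      exact fun x hx => hsub (Set.mem_insert_of_mem e hx)
    · refine ⟨e :: l, ?_, ?_, by simp [hlmap, hlab]⟩
      · refine List.nodup_cons.mpr ⟨?_, hnd⟩
        intro hmem
        have : e ∈ X' \ X₁ := by rw [← hlset]; exact hmem
        exact this.2 heX₁
      · ext x
        simp only [List.mem_cons, Set.mem_setOf_eq, Set.mem_diff]
        constructor
        · rintro (rfl | hx)
          · exact ⟨hX₁sub heX₁, heX⟩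
          · have : x ∈ X' \ X₁ := by rw [← hlset]; exact hx
            refine ⟨this.1, fun hxX => this.2 ?_⟩
            rw [hX₁]; exact Set.mem_insert_of_mem e hxX
        · rintro ⟨hx', hx⟩
          by_cases hxe : x = e
          · exact Or.inl hxe
          · have hxmem : x ∈ X' \ X₁ := by
              refine ⟨hx', fun hmem => ?_⟩
              rw [hX₁] at hmem
              rcases hmem with rfl | hmem
              · exact hxe rfl
              · exact hx hmem
            right
            have hxl : x ∈ {e | e ∈ l} := hlset ▸ hxmem
            exact hxl

lemma stepTrans_of_steps (hP : P.IsCS) {X X' : Set P.E} {w : List A}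
    (hw : w ≠ []) (h : P.Steps X w X') : P.StepTrans X (Multiset.ofList w) X' := by
  classical
  obtain ⟨hsub, l, hnd, hlset, hlmap⟩ := sets_of_steps h
  have hC' : P.Config X' := steps_config_right h
  refine ⟨steps_config_left h, hC', hsub, l.toFinset, ?_, ?_, ?_, ?_⟩
  · rw [List.coe_toFinset, hlset]
  · have hlne : l ≠ [] := by
      intro hln; rw [hln] at hlmap; exact hw hlmap.symm
    exact ⟨l.head hlne, List.mem_toFinset.mpr (List.head_mem hlne)⟩
  · intro e he e' he' hne
    have he1 : e ∈ X' := by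
      have : e ∈ X' \ X := hlset ▸ List.mem_toFinset.mp he
      exact this.1
    have he2 : e' ∈ X' := by
      have : e' ∈ X' \ X := hlset ▸ List.mem_toFinset.mp he'
      exact this.1
    exact ⟨fun hle => hne (hP _ _ hle), fun hle => hne (hP _ _ hle).symm,
      hC'.2.1 e he1 e' he2⟩
  · rw [List.toFinset_val, hnd.dedup]
    show Multiset.map P.lab (Multiset.ofList l) = Multiset.ofList w
    rw [show Multiset.map P.lab (Multiset.ofList l) = Multiset.ofList (l.map P.lab) from rfl,
      hlmap]

lemma step_to_seq (hP : P.IsCS) {s : List (Multiset A)} :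
    ∀ {X : Set P.E}, P.StepTraceFrom X s →
      ∃ ws : List (List A), ws.map Multiset.ofList = s ∧
        (∀ w ∈ ws, w ≠ []) ∧ P.TraceFrom X ws.flatten := by
  induction s with
  | nil =>
    intro X h
    exact ⟨[], rfl, by simp, h⟩
  | cons m s ih =>
    intro X h
    obtain ⟨X', hst, hrest⟩ := h
    obtain ⟨ws, hmap, hne, htr⟩ := ih hrest
    obtain ⟨hCX, hCX', hsub, G, hG, hGne, hco, hGlab⟩ := hst
    set l := G.toList with hl
    have hlset : {e | e ∈ l} = ↑G := by
      ext x; simp [hl]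
    have hXl : X ∪ {e | e ∈ l} = X' := by
      rw [hlset, hG]
      ext x
      simp only [Set.mem_union, Set.mem_diff]
      constructor
      · rintro (hx | hx)
        · exact hsub hx
        · exact hx.1
      · intro hx
        by_cases hxX : x ∈ X
        · exact Or.inl hxX
        · exact Or.inr ⟨hx, hxX⟩
    have hsteps : P.Steps X (l.map P.lab) X' := by
      rw [← hXl]
      refine seq_of_list hP l X (hXl ▸ hCX') G.nodup_toList ?_
      intro e he
      have : e ∈ X' \ X := hG ▸ (hlset ▸ (Set.mem_setOf_eq ▸ he) : e ∈ (↑G : Set P.E))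
      exact this.2
    refine ⟨(l.map P.lab) :: ws, ?_, ?_, ?_⟩
    · simp only [List.map_cons, hmap]
      congr 1
      rw [show Multiset.ofList (l.map P.lab) = Multiset.map P.lab (Multiset.ofList l) from rfl]
      rw [hl, Finset.coe_toList, hGlab]
    · intro w hw
      rcases List.mem_cons.mp hw with rfl | hw
      · intro hln
        have hle : l = [] := List.map_eq_nil_iff.mp hln
        obtain ⟨g, hg⟩ := hGne
        rw [← Finset.mem_toList, ← hl, hle] at hg
        exact List.not_mem_nil hg
      · exact hne w hw
    · rw [List.flatten_cons]
      exact steps_traceFrom_append hsteps htr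

lemma seq_to_step (hP : P.IsCS) {ws : List (List A)} :
    ∀ {X : Set P.E}, (∀ w ∈ ws, w ≠ []) → P.TraceFrom X ws.flatten →
      P.StepTraceFrom X (ws.map Multiset.ofList) := by
  induction ws with
  | nil => intro X _ h; exact h
  | cons w ws ih =>
    intro X hne h
    rw [List.flatten_cons] at h
    obtain ⟨Xf, hs⟩ := traceFrom_iff_steps.mp h
    have hsplit : ∀ (u v : List A) (Y : Set P.E), P.Steps Y (u ++ v) Xf →
        ∃ Y', P.Steps Y u Y' ∧ P.Steps Y' v Xf := by
      intro u
      induction u with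
      | nil =>
        intro v Y hy
        exact ⟨Y, ⟨rfl, steps_config_left hy⟩, hy⟩
      | cons a u ihu =>
        intro v Y hy
        obtain ⟨Y₁, hT, hy'⟩ := hy
        obtain ⟨Y', h1, h2⟩ := ihu v Y₁ hy'
        exact ⟨Y', ⟨Y₁, hT, h1⟩, h2⟩
    obtain ⟨X₁, h1, h2⟩ := hsplit w ws.flatten X hs
    refine ⟨X₁, stepTrans_of_steps hP (hne w List.mem_cons_self) h1, ?_⟩
    exact ih (fun u hu => hne u (List.mem_cons_of_mem w hu))
      (traceFrom_iff_steps.mpr ⟨Xf, h2⟩)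

end PES

theorem cs_it_implies_st {A : Type*} (P Q : PES A) (hP : P.IsCS) (hQ : Q.IsCS)
    (h : PES.ITrEq P Q) : PES.STrEq P Q := by
  intro s
  constructor
  · intro hs
    obtain ⟨ws, hmap, hne, htr⟩ := PES.step_to_seq hP hs
    have hQtr : Q.STr ws.flatten := (h ws.flatten).mp htr
    rw [← hmap]
    exact PES.seq_to_step hQ hne hQtr
  · intro hs
    obtain ⟨ws, hmap, hne, htr⟩ := PES.step_to_seq hQ hs
    have hPtr : P.STr ws.flatten := (h ws.flatten).mpr htr
    rw [← hmap]
    exact PES.seq_to_step hP hne hPtr
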